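/- (Intermediate state for equal velocities.) Let u₀ ∈ ℝ, 0 < ρ_r < ρ_l, and ε > 0. Define u₁ : [ρ_r, ρ_l] → ℝ by u₁(ρ) = u₀ + ∫_ρ^{ρ_l} √(ε·p′(ξ)/ξ) dξ = u₀ + √ε·∫_ρ^{ρ_l} e^{ξ/2} dξ (the 1-rarefaction curve through (u₀, ρ_l)), and let u₂ : [ρ_r, ρ_l] → ℝ be the function with u₂(ρ) ≥ u₀ and (u₂(ρ) − u₀)² = 2ε·((ρ − ρ_r)/(ρ + ρ_r))·(p(ρ) − p(ρ_r)) (the admissible 2-shock curve ending at (u₀, ρ_r)). Then there exists a unique ρ* ∈ (ρ_r, ρ_l) such that u₁(ρ*) = u₂(ρ*). -/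

import Mathlib

open Real Filter Topology

noncomputable def p (ρ : ℝ) : ℝ := ∫ ξ in (0:ℝ)..ρ, ξ * Real.exp ξ

private lemma hasDerivAt_P (x : ℝ) :
    HasDerivAt (fun x : ℝ => (x - 1) * Real.exp x + 1) (x * Real.exp x) x := by
  have h := (((hasDerivAt_id x).sub_const 1).mul (Real.hasDerivAt_exp x)).add_const 1
  exact h.congr_deriv (by simp only [id_eq]; ring)

private lemma p_eq (ρ : ℝ) : p ρ = (ρ - 1) * Real.exp ρ + 1 := by
  have h : ∫ ξ in (0:ℝ)..ρ, ξ * Real.exp ξ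
      = ((ρ - 1) * Real.exp ρ + 1) - ((0 - 1) * Real.exp 0 + 1) := by
    apply intervalIntegral.integral_eq_sub_of_hasDerivAt
    · exact fun ξ _ => hasDerivAt_P ξ
    · exact (continuous_id.mul Real.continuous_exp).intervalIntegrable 0 ρ
  simp only [p, h, Real.exp_zero]
  ring

private lemma p_strictMonoOn (a b : ℝ) (ha : 0 < a) :
    StrictMonoOn p (Set.Icc a b) := by
  have hP : StrictMonoOn (fun x : ℝ => (x - 1) * Real.exp x + 1) (Set.Icc a b) := by
    apply strictMonoOn_of_deriv_pos (convex_Icc a b)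
    · exact (((continuous_id.sub continuous_const).mul Real.continuous_exp).add
        continuous_const).continuousOn
    · intro x hx
      rw [interior_Icc] at hx
      rw [(hasDerivAt_P x).deriv]
      exact mul_pos (lt_trans ha hx.1) (Real.exp_pos x)
  intro x hx y hy hxy
  rw [p_eq, p_eq]
  exact hP hx hy hxy

private lemma exp_half_integral (a b : ℝ) :
    (∫ ξ in a..b, Real.exp (ξ / 2)) = 2 * Real.exp (b / 2) - 2 * Real.exp (a / 2) := by
  have h : ∀ ξ ∈ Set.uIcc a b,
      HasDerivAt (fun x : ℝ => 2 * Real.exp (x / 2)) (Real.exp (ξ / 2)) ξ := by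
    intro ξ _
    have h1 : HasDerivAt (fun x : ℝ => x / 2) (1 / 2) ξ := (hasDerivAt_id ξ).div_const 2
    have h2 := (Real.hasDerivAt_exp (ξ / 2)).comp ξ h1
    have h3 := h2.const_mul 2
    exact h3.congr_deriv (by ring)
  have := intervalIntegral.integral_eq_sub_of_hasDerivAt h
    ((Real.continuous_exp.comp (continuous_id.div_const 2)).intervalIntegrable a b)
  rw [this]

/-- Intermediate state for equal velocities: the 1-rarefaction curve through `(u₀, ρ_l)`
and the admissible 2-shock curve ending at `(u₀, ρ_r)` intersect at a unique
`ρ* ∈ (ρ_r, ρ_l)`. -/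
theorem stmt16 (u0 ρr ρl ε : ℝ) (hρr : 0 < ρr) (hlt : ρr < ρl) (hε : 0 < ε)
    (u₁ u₂ : ℝ → ℝ)
    (hu₁ : ∀ ρ ∈ Set.Icc ρr ρl,
      u₁ ρ = u0 + ∫ ξ in ρ..ρl, Real.sqrt (ε * (ξ * Real.exp ξ) / ξ))
    (hu₂ : ∀ ρ ∈ Set.Icc ρr ρl, u0 ≤ u₂ ρ ∧
      (u₂ ρ - u0) ^ 2 = 2 * ε * ((ρ - ρr) / (ρ + ρr)) * (p ρ - p ρr)) :
    ∃! ρstar : ℝ, ρstar ∈ Set.Ioo ρr ρl ∧ u₁ ρstar = u₂ ρstar := by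
  set Q : ℝ → ℝ := fun ρ => 2 * ε * ((ρ - ρr) / (ρ + ρr)) * (p ρ - p ρr) with hQ
  -- u₁ explicit formula
  have hu1' : ∀ ρ ∈ Set.Icc ρr ρl,
      u₁ ρ = u0 + 2 * Real.sqrt ε * (Real.exp (ρl / 2) - Real.exp (ρ / 2)) := by
    intro ρ hρ
    rw [hu₁ ρ hρ]
    congr 1
    have hcong : ∀ ξ ∈ Set.uIcc ρ ρl,
        Real.sqrt (ε * (ξ * Real.exp ξ) / ξ) = Real.sqrt ε * Real.exp (ξ / 2) := by
      intro ξ hξ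
      rw [Set.uIcc_of_le hρ.2] at hξ
      have hξ0 : 0 < ξ := lt_of_lt_of_le hρr (le_trans hρ.1 hξ.1)
      have : ε * (ξ * Real.exp ξ) / ξ = ε * Real.exp ξ := by
        field_simp
      rw [this, Real.sqrt_mul hε.le, ← Real.exp_half]
    rw [intervalIntegral.integral_congr hcong, intervalIntegral.integral_const_mul,
      exp_half_integral]
    ring
  -- u₂ explicit formula
  have hu2' : ∀ ρ ∈ Set.Icc ρr ρl, u₂ ρ = u0 + Real.sqrt (Q ρ) := by
    intro ρ hρ
    obtain ⟨h1, h2⟩ := hu₂ ρ hρ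
    have : Real.sqrt (Q ρ) = u₂ ρ - u0 := by
      show Real.sqrt (2 * ε * ((ρ - ρr) / (ρ + ρr)) * (p ρ - p ρr)) = u₂ ρ - u0
      rw [← h2, Real.sqrt_sq_eq_abs, abs_of_nonneg (by linarith)]
    linarith [this]
  -- Q is nonneg and strictly monotone on Icc
  have hQmono : StrictMonoOn Q (Set.Icc ρr ρl) := by
    intro x hx y hy hxy
    have hpx : p ρr ≤ p x := by
      rcases eq_or_lt_of_le hx.1 with h | h
      · rw [h]
      · exact le_of_lt (p_strictMonoOn ρr ρl hρr ⟨le_refl _, hlt.le⟩ hx h)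
    have hpxy : p x < p y := p_strictMonoOn ρr ρl hρr hx hy hxy
    have hfx : 0 ≤ (x - ρr) / (x + ρr) := by
      apply div_nonneg (by linarith [hx.1]) (by linarith [hx.1])
    have hfy : 0 < (y - ρr) / (y + ρr) := by
      apply div_pos (by linarith [lt_of_le_of_lt hx.1 hxy]) (by linarith [hy.1])
    have hfxy : (x - ρr) / (x + ρr) < (y - ρr) / (y + ρr) := by
      rw [div_lt_div_iff₀ (by linarith [hx.1]) (by linarith [hy.1])]
      nlinarith [hx.1]
    have key : (x - ρr) / (x + ρr) * (p x - p ρr) < (y - ρr) / (y + ρr) * (p y - p ρr) := by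
      nlinarith
    simp only [hQ]
    nlinarith
  have hQnonneg : ∀ ρ ∈ Set.Icc ρr ρl, 0 ≤ Q ρ := by
    intro ρ hρ
    have hpx : p ρr ≤ p ρ := by
      rcases eq_or_lt_of_le hρ.1 with h | h
      · rw [h]
      · exact le_of_lt (p_strictMonoOn ρr ρl hρr ⟨le_refl _, hlt.le⟩ hρ h)
    have : 0 ≤ (ρ - ρr) / (ρ + ρr) :=
      div_nonneg (by linarith [hρ.1]) (by linarith [hρ.1])
    show 0 ≤ 2 * ε * ((ρ - ρr) / (ρ + ρr)) * (p ρ - p ρr)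
    exact mul_nonneg (mul_nonneg (by linarith) this) (by linarith)
  -- the gap function
  set G : ℝ → ℝ := fun ρ =>
    2 * Real.sqrt ε * (Real.exp (ρl / 2) - Real.exp (ρ / 2)) - Real.sqrt (Q ρ) with hG
  have hsε : 0 < Real.sqrt ε := Real.sqrt_pos.mpr hε
  have hGanti : StrictAntiOn G (Set.Icc ρr ρl) := by
    intro x hx y hy hxy
    have h1 : Real.exp (x / 2) < Real.exp (y / 2) := Real.exp_lt_exp.mpr (by linarith)
    have h2 : Real.sqrt (Q x) ≤ Real.sqrt (Q y) :=
      Real.sqrt_le_sqrt (le_of_lt (hQmono hx hy hxy))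
    simp only [hG]
    nlinarith
  have hGcont : ContinuousOn G (Set.Icc ρr ρl) := by
    apply ContinuousOn.sub
    · exact (continuous_const.mul
        (continuous_const.sub (Real.continuous_exp.comp (continuous_id.div_const 2)))).continuousOn
    · apply ContinuousOn.sqrt
      have hpc : Continuous p := by
        have hp : p = fun x => (x - 1) * Real.exp x + 1 := funext p_eq
        rw [hp]
        exact ((continuous_id.sub continuous_const).mul Real.continuous_exp).add continuous_const
      rw [hQ]
      apply ContinuousOn.mul
      · apply ContinuousOn.mul continuousOn_const
        apply ContinuousOn.div
        · exact (continuous_id.sub continuous_const).continuousOn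
        · exact (continuous_id.add continuous_const).continuousOn
        · intro x hx
          have h1 : 0 < x + ρr := by linarith [hx.1]
          exact h1.ne'
      · exact (hpc.sub continuous_const).continuousOn
  have hQr : Q ρr = 0 := by simp [hQ]
  have hGr : 0 < G ρr := by
    have : Real.exp (ρr / 2) < Real.exp (ρl / 2) := Real.exp_lt_exp.mpr (by linarith)
    simp only [hG, hQr, Real.sqrt_zero]
    nlinarith
  have hGl : G ρl < 0 := by
    have hQl : 0 < Q ρl := by
      rw [← hQr]
      exact hQmono ⟨le_refl _, hlt.le⟩ ⟨hlt.le, le_refl _⟩ hlt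
    have : 0 < Real.sqrt (Q ρl) := Real.sqrt_pos.mpr hQl
    simp only [hG]
    simp only [sub_self, mul_zero]
    linarith
  -- existence via IVT
  have hIVT := intermediate_value_Ioo' hlt.le hGcont
  have h0 : (0 : ℝ) ∈ Set.Ioo (G ρl) (G ρr) := ⟨hGl, hGr⟩
  obtain ⟨ρs, hρs, hGs⟩ := hIVT h0
  have hIoo_sub : Set.Ioo ρr ρl ⊆ Set.Icc ρr ρl := Set.Ioo_subset_Icc_self
  have heq : ∀ ρ ∈ Set.Icc ρr ρl, (u₁ ρ = u₂ ρ ↔ G ρ = 0) := by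
    intro ρ hρ
    rw [hu1' ρ hρ, hu2' ρ hρ]
    simp only [hG]
    constructor <;> intro h <;> linarith
  refine ⟨ρs, ⟨hρs, (heq ρs (hIoo_sub hρs)).mpr hGs⟩, ?_⟩
  rintro y ⟨hy, hyeq⟩
  have hGy : G y = 0 := (heq y (hIoo_sub hy)).mp hyeq
  exact hGanti.injOn (hIoo_sub hy) (hIoo_sub hρs) (by rw [hGy, hGs])
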